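/- Let F be a finite tuple of Möbius transformations generating a semigroup S, and suppose there is an open interval J in the extended real line mapped compactly inside itself by every generator (i.e., the closure of the image of J under each generator is contained in J). Then S contains no elliptic elements and does not accumulate at the identity; in particular S does not contain the identity. -/

import Mathlib

open Filter Topology OnePoint

local notation "SL2" => Matrix.SpecialLinearGroup (Fin 2) ℝ

instance : Fact (Even (Fintype.card (Fin 2))) := ⟨by simp⟩

/-- The action of an element of `SL(2, ℝ)` on the Riemann sphere by Möbius transformation. -/
noncomputable def mobiusExt (g : SL2) : OnePoint ℂ → OnePoint ℂ :=
  fun p => Option.elim (p : Option ℂ)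
    (if (g 1 0 : ℝ) = 0 then (∞ : OnePoint ℂ) else (((g 0 0 / g 1 0 : ℝ) : ℂ) : OnePoint ℂ))
    (fun z => if ((g 1 0 : ℝ) : ℂ) * z + ((g 1 1 : ℝ) : ℂ) = 0 then (∞ : OnePoint ℂ)
      else (((((g 0 0 : ℝ) : ℂ) * z + ((g 0 1 : ℝ) : ℂ)) /
            (((g 1 0 : ℝ) : ℂ) * z + ((g 1 1 : ℝ) : ℂ))) : OnePoint ℂ))

/-- Membership in the extended real line `ℝ ∪ {∞}` inside the Riemann sphere. -/
def inExtReal (p : OnePoint ℂ) : Prop := p = ∞ ∨ ∃ r : ℝ, p = ((r : ℂ) : OnePoint ℂ)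

/-- The forward limit set of a set `S` of elements of `SL(2, ℝ)`: the accumulation points,
on the extended real line, of the orbit of the point `i` under the corresponding Möbius
transformations. -/
def limitSet (S : Set SL2) : Set (OnePoint ℂ) :=
  {p | inExtReal p ∧
    AccPt p (𝓟 ((fun g => mobiusExt g ((Complex.I : ℂ) : OnePoint ℂ)) '' S))}

instance : TopologicalSpace SL2 :=
  show TopologicalSpace {A : Matrix (Fin 2) (Fin 2) ℝ // A.det = 1} from inferInstance

lemma mob_coe (g : SL2) (t : ℝ) :
    mobiusExt g (((t : ℂ)) : OnePoint ℂ) =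
      if (g 1 0 * t + g 1 1 : ℝ) = 0 then ∞
      else ((((g 0 0 * t + g 0 1) / (g 1 0 * t + g 1 1) : ℝ) : ℂ) : OnePoint ℂ) := by
  have h1 : ((g 1 0 : ℝ) : ℂ) * (t : ℂ) + ((g 1 1 : ℝ) : ℂ) = ((g 1 0 * t + g 1 1 : ℝ) : ℂ) := by
    push_cast; ring
  have h2 : ((g 0 0 : ℝ) : ℂ) * (t : ℂ) + ((g 0 1 : ℝ) : ℂ) = ((g 0 0 * t + g 0 1 : ℝ) : ℂ) := by
    push_cast; ring
  show (if ((g 1 0 : ℝ) : ℂ) * (t : ℂ) + ((g 1 1 : ℝ) : ℂ) = 0 then (∞ : OnePoint ℂ)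
      else (((((g 0 0 : ℝ) : ℂ) * (t : ℂ) + ((g 0 1 : ℝ) : ℂ)) /
            (((g 1 0 : ℝ) : ℂ) * (t : ℂ) + ((g 1 1 : ℝ) : ℂ))) : OnePoint ℂ)) = _
  rw [h1, h2, ← Complex.ofReal_div]
  simp only [Complex.ofReal_eq_zero]

lemma mob_one (t : ℝ) : mobiusExt 1 (((t : ℂ)) : OnePoint ℂ) = ((t : ℂ) : OnePoint ℂ) := by
  rw [mob_coe]; norm_num

lemma mob_neg_one (t : ℝ) : mobiusExt (-1) (((t : ℂ)) : OnePoint ℂ) = ((t : ℂ) : OnePoint ℂ) := by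
  rw [mob_coe]
  have h0 : ((-1 : SL2) 1 0 : ℝ) = 0 := by simp
  have h1 : ((-1 : SL2) 1 1 : ℝ) = -1 := by simp
  have h2 : ((-1 : SL2) 0 0 : ℝ) = -1 := by simp
  have h3 : ((-1 : SL2) 0 1 : ℝ) = 0 := by simp
  rw [h0, h1, h2, h3]; norm_num

lemma mob_comp (g h : SL2) (t : ℝ) (hd : (h 1 0 : ℝ) * t + h 1 1 ≠ 0)
    (hd2 : (g 1 0 : ℝ) * ((h 0 0 * t + h 0 1) / (h 1 0 * t + h 1 1)) + g 1 1 ≠ 0) :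
    mobiusExt (g * h) (((t : ℂ)) : OnePoint ℂ)
      = mobiusExt g (mobiusExt h (((t : ℂ)) : OnePoint ℂ)) := by
  have e00 : ((g * h) 0 0 : ℝ) = g 0 0 * h 0 0 + g 0 1 * h 1 0 := by
    simp [Matrix.mul_apply, Fin.sum_univ_two]
  have e01 : ((g * h) 0 1 : ℝ) = g 0 0 * h 0 1 + g 0 1 * h 1 1 := by
    simp [Matrix.mul_apply, Fin.sum_univ_two]
  have e10 : ((g * h) 1 0 : ℝ) = g 1 0 * h 0 0 + g 1 1 * h 1 0 := by
    simp [Matrix.mul_apply, Fin.sum_univ_two]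
  have e11 : ((g * h) 1 1 : ℝ) = g 1 0 * h 0 1 + g 1 1 * h 1 1 := by
    simp [Matrix.mul_apply, Fin.sum_univ_two]
  set s : ℝ := (h 0 0 * t + h 0 1) / (h 1 0 * t + h 1 1) with hs
  have hden : ((g * h) 1 0 : ℝ) * t + (g * h) 1 1
      = (h 1 0 * t + h 1 1) * (g 1 0 * s + g 1 1) := by
    rw [e10, e11, hs]; field_simp; ring
  have hdenne : ((g * h) 1 0 : ℝ) * t + (g * h) 1 1 ≠ 0 := by
    rw [hden]; exact mul_ne_zero hd hd2
  rw [mob_coe h t, if_neg hd, ← hs, mob_coe g s, if_neg hd2, mob_coe (g * h) t, if_neg hdenne]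
  congr 2
  have hnum : ((g * h) 0 0 : ℝ) * t + (g * h) 0 1
      = (h 1 0 * t + h 1 1) * (g 0 0 * s + g 0 1) := by
    rw [e00, e01, hs]; field_simp; ring
  rw [hnum, hden, mul_div_mul_left _ _ hd]

/-- Let `F = (A₁, …, A_N)` be a tuple of Möbius transformations generating a
semigroup `S`, and suppose there is an open interval `J` of the extended real line mapped
compactly inside itself by every generator (the closure of the image of `J` under each
generator is contained in `J`). Then `S` contains no elliptic elements, does not accumulate
at the identity, and in particular does not contain the identity (which, in `SL(2, ℝ)`, is
represented by `±1`). -/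
theorem no_elliptics_and_no_accumulation_at_identity
    (N : ℕ) (A : Fin N → SL2) (u v : ℝ) (huv : u < v)
    (J : Set (OnePoint ℂ)) (hJ : J = (fun r : ℝ => ((r : ℂ) : OnePoint ℂ)) '' Set.Ioo u v)
    (hmaps : ∀ i, closure (mobiusExt (A i) '' J) ⊆ J) :
    (∀ g ∈ Subsemigroup.closure (Set.range A),
        ¬ |Matrix.trace (g : Matrix (Fin 2) (Fin 2) ℝ)| < 2) ∧
    ¬ AccPt (1 : SL2) (𝓟 (Subsemigroup.closure (Set.range A) : Set SL2)) ∧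
    ¬ AccPt (-1 : SL2) (𝓟 (Subsemigroup.closure (Set.range A) : Set SL2)) ∧
    (1 : SL2) ∉ Subsemigroup.closure (Set.range A) ∧
    (-1 : SL2) ∉ Subsemigroup.closure (Set.range A) := by
  classical
  set ψ : ℝ → OnePoint ℂ := fun r => ((r : ℂ) : OnePoint ℂ) with hψdef
  have hψc : Continuous ψ := OnePoint.continuous_coe.comp Complex.continuous_ofReal
  have hψi : Function.Injective ψ := fun a b hab =>
    Complex.ofReal_injective (OnePoint.coe_injective hab)
  have hψJ : ∀ t ∈ Set.Ioo u v, ψ t ∈ J := fun t ht => hJ ▸ ⟨t, ht, rfl⟩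
  have hJmem : ∀ p ∈ J, ∃ t ∈ Set.Ioo u v, p = ψ t := by
    intro p hp; rw [hJ] at hp; obtain ⟨t, ht, hq⟩ := hp; exact ⟨t, ht, hq.symm⟩
  set K : Set (OnePoint ℂ) := ⋃ i, closure (mobiusExt (A i) '' J) with hKdef
  have hKc : IsClosed K := isClosed_iUnion_of_finite fun i => isClosed_closure
  have hKJ : K ⊆ J := Set.iUnion_subset hmaps
  have hmem : ∀ (g : SL2) (t : ℝ), mobiusExt g (ψ t) ∈ J →
      (g 1 0 : ℝ) * t + g 1 1 ≠ 0 ∧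
      ((g 0 0 : ℝ) * t + g 0 1) / ((g 1 0 : ℝ) * t + g 1 1) ∈ Set.Ioo u v ∧
      mobiusExt g (ψ t) = ψ (((g 0 0 : ℝ) * t + g 0 1) / ((g 1 0 : ℝ) * t + g 1 1)) := by
    intro g t hgt
    have hd : (g 1 0 : ℝ) * t + g 1 1 ≠ 0 := by
      intro h0
      rw [show ψ t = (((t : ℂ)) : OnePoint ℂ) from rfl, mob_coe, if_pos h0] at hgt
      obtain ⟨r, _, hq⟩ := hJmem _ hgt
      exact OnePoint.coe_ne_infty _ hq.symm
    have heq : mobiusExt g (ψ t)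
        = ψ (((g 0 0 : ℝ) * t + g 0 1) / ((g 1 0 : ℝ) * t + g 1 1)) := by
      rw [show ψ t = (((t : ℂ)) : OnePoint ℂ) from rfl, mob_coe, if_neg hd]
    rw [heq] at hgt
    obtain ⟨r, hr, hq⟩ := hJmem _ hgt
    refine ⟨hd, ?_, heq⟩
    rw [hψi hq]; exact hr
  have key : ∀ g ∈ Subsemigroup.closure (Set.range A), mobiusExt g '' J ⊆ K := by
    intro g hg
    induction hg using Subsemigroup.closure_induction with
    | mem x hx =>
      obtain ⟨i, rfl⟩ := hx
      exact subset_closure.trans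
        (Set.subset_iUnion (fun i => closure (mobiusExt (A i) '' J)) i)
    | mul x y hx hy ihx ihy =>
      rintro p ⟨q, hq, rfl⟩
      obtain ⟨t, ht, rfl⟩ := hJmem q hq
      have hyJ : mobiusExt y (ψ t) ∈ J := hKJ (ihy ⟨ψ t, hq, rfl⟩)
      obtain ⟨hdy, hsy, heqy⟩ := hmem y t hyJ
      set s : ℝ := ((y 0 0 : ℝ) * t + y 0 1) / ((y 1 0 : ℝ) * t + y 1 1) with hs
      have hxK : mobiusExt x (ψ s) ∈ K := ihx ⟨ψ s, hψJ s hsy, rfl⟩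
      obtain ⟨hdx, _, _⟩ := hmem x s (hKJ hxK)
      have hcomp := mob_comp x y t hdy hdx
      rw [show (((t : ℂ)) : OnePoint ℂ) = ψ t from rfl] at hcomp
      rw [hcomp, heqy]
      exact hxK
  have noell : ∀ g ∈ Subsemigroup.closure (Set.range A),
      ¬ |Matrix.trace ((g : SL2) : Matrix (Fin 2) (Fin 2) ℝ)| < 2 := by
    intro g hg htr
    have himg : mobiusExt g '' J ⊆ K := key g hg
    have hclo : closure (mobiusExt g '' J) ⊆ J :=
      (hKc.closure_subset_iff.mpr himg).trans hKJ
    have hdet : (g 0 0 : ℝ) * g 1 1 - g 0 1 * g 1 0 = 1 := by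
      have h2 := g.2; rw [Matrix.det_fin_two] at h2; linarith
    rw [Matrix.trace_fin_two] at htr
    set f : ℝ → ℝ := fun t => ((g 0 0 : ℝ) * t + g 0 1) / ((g 1 0 : ℝ) * t + g 1 1) with hfdef
    have hstep : ∀ t ∈ Set.Ioo u v, (g 1 0 : ℝ) * t + g 1 1 ≠ 0 ∧ f t ∈ Set.Ioo u v ∧
        mobiusExt g (ψ t) = ψ (f t) :=
      fun t ht => hmem g t (hKJ (himg ⟨ψ t, hψJ t ht, rfl⟩))
    have hfix : ∀ t ∈ Set.Ioo u v, f t ≠ t := by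
      intro t ht heq
      have hd := (hstep t ht).1
      have h1 : (g 0 0 : ℝ) * t + g 0 1 = t * ((g 1 0 : ℝ) * t + g 1 1) :=
        (div_eq_iff hd).mp heq
      have h2 := abs_lt.mp htr
      have h4 : ((g 0 0 : ℝ) + g 1 1) ^ 2 < 4 := by nlinarith [h2.1, h2.2]
      have keyq : (2 * (g 1 0 : ℝ) * t + ((g 1 1 : ℝ) - g 0 0)) ^ 2
          = ((g 0 0 : ℝ) + g 1 1) ^ 2 - 4 := by
        linear_combination (-4 * (g 1 0 : ℝ)) * h1 - 4 * hdet
      nlinarith [sq_nonneg (2 * (g 1 0 : ℝ) * t + ((g 1 1 : ℝ) - g 0 0))]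
    have hfc : ContinuousOn f (Set.Ioo u v) := by
      apply ContinuousOn.div
      · exact ((continuous_const.mul continuous_id).add continuous_const).continuousOn
      · exact ((continuous_const.mul continuous_id).add continuous_const).continuousOn
      · exact fun t ht => (hstep t ht).1
    have hsign : (∀ t ∈ Set.Ioo u v, t < f t) ∨ (∀ t ∈ Set.Ioo u v, f t < t) := by
      by_contra hcon
      push_neg at hcon
      obtain ⟨⟨t₁, ht₁, h₁⟩, ⟨t₂, ht₂, h₂⟩⟩ := hcon
      have h₁' : f t₁ < t₁ := lt_of_le_of_ne h₁ (hfix t₁ ht₁)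
      have h₂' : t₂ < f t₂ := lt_of_le_of_ne h₂ (fun hh => hfix t₂ ht₂ hh.symm)
      have hsub : Set.uIcc t₁ t₂ ⊆ Set.Ioo u v := Set.ordConnected_Ioo.uIcc_subset ht₁ ht₂
      have hcont : ContinuousOn (fun t => f t - t) (Set.uIcc t₁ t₂) :=
        (hfc.mono hsub).sub continuousOn_id
      have h0 : (0 : ℝ) ∈ Set.uIcc (f t₁ - t₁) (f t₂ - t₂) := by
        rw [Set.mem_uIcc]
        exact Or.inl ⟨by linarith, by linarith⟩
      obtain ⟨t, htmem, ht0⟩ := intermediate_value_uIcc hcont h0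
      have htt : f t - t = 0 := ht0
      exact hfix t (hsub htmem) (by linarith)
    rcases hsign with hs | hs
    · have hne : (𝓝[Set.Ioo u v] v).NeBot := right_nhdsWithin_Ioo_neBot huv
      have htend : Tendsto f (𝓝[Set.Ioo u v] v) (𝓝 v) := by
        apply tendsto_of_tendsto_of_tendsto_of_le_of_le'
          (tendsto_id.mono_right nhdsWithin_le_nhds) tendsto_const_nhds
        · filter_upwards [self_mem_nhdsWithin] with t ht using le_of_lt (hs t ht)
        · filter_upwards [self_mem_nhdsWithin] with t ht using le_of_lt (hstep t ht).2.1.2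
      have hv : ψ v ∈ closure (mobiusExt g '' J) := by
        apply mem_closure_of_tendsto ((hψc.tendsto v).comp htend)
        filter_upwards [self_mem_nhdsWithin] with t ht
        exact ⟨ψ t, hψJ t ht, (hstep t ht).2.2⟩
      obtain ⟨r, hr, hq⟩ := hJmem _ (hclo hv)
      have hvr : v = r := hψi hq
      rw [← hvr] at hr
      exact lt_irrefl v hr.2
    · have hne : (𝓝[Set.Ioo u v] u).NeBot := left_nhdsWithin_Ioo_neBot huv
      have htend : Tendsto f (𝓝[Set.Ioo u v] u) (𝓝 u) := by
        apply tendsto_of_tendsto_of_tendsto_of_le_of_le'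
          tendsto_const_nhds (tendsto_id.mono_right nhdsWithin_le_nhds)
        · filter_upwards [self_mem_nhdsWithin] with t ht using le_of_lt (hstep t ht).2.1.1
        · filter_upwards [self_mem_nhdsWithin] with t ht using le_of_lt (hs t ht)
      have hv : ψ u ∈ closure (mobiusExt g '' J) := by
        apply mem_closure_of_tendsto ((hψc.tendsto u).comp htend)
        filter_upwards [self_mem_nhdsWithin] with t ht
        exact ⟨ψ t, hψJ t ht, (hstep t ht).2.2⟩
      obtain ⟨r, hr, hq⟩ := hJmem _ (hclo hv)
      have hvr : u = r := hψi hq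
      rw [← hvr] at hr
      exact lt_irrefl u hr.1
  -- choose a point of the interval avoiding K
  set C : Set ℝ := ψ ⁻¹' K with hCdef
  have hCclosed : IsClosed C := hKc.preimage hψc
  have hCsub : C ⊆ Set.Ioo u v := by
    intro t ht
    obtain ⟨r, hr, hq⟩ := hJmem _ (hKJ ht)
    rw [hψi hq]; exact hr
  obtain ⟨w, hw, hwC⟩ : ∃ w ∈ Set.Ioo u v, w ∉ C := by
    by_cases hCe : C.Nonempty
    · have hbdd : BddAbove C := BddAbove.mono hCsub bddAbove_Ioo
      have hmem' : sSup C ∈ C := hCclosed.csSup_mem hCe hbdd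
      have hlt : sSup C < v := (hCsub hmem').2
      have hgt : u < sSup C := (hCsub hmem').1
      refine ⟨(sSup C + v) / 2, ⟨by linarith, by linarith⟩, fun hmem2 => ?_⟩
      have := le_csSup hbdd hmem2
      linarith
    · exact ⟨(u + v) / 2, ⟨by linarith, by linarith⟩, fun h => hCe ⟨_, h⟩⟩
  have hsep : ∀ x : SL2, (x 1 0 : ℝ) * w + x 1 1 ≠ 0 →
      ((x 0 0 : ℝ) * w + x 0 1) / ((x 1 0 : ℝ) * w + x 1 1) = w →
      ∃ U ∈ 𝓝 x, ∀ g ∈ Subsemigroup.closure (Set.range A), g ∉ U := by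
    intro x hxd hxw
    have hcN : Continuous (fun g : SL2 => (g 0 0 : ℝ) * w + g 0 1) :=
      ((((continuous_apply_apply 0 0).comp (continuous_subtype_val (p := fun A : Matrix (Fin 2) (Fin 2) ℝ => A.det = 1))).mul continuous_const).add
        ((continuous_apply_apply 0 1).comp (continuous_subtype_val (p := fun A : Matrix (Fin 2) (Fin 2) ℝ => A.det = 1))))
    have hcD : Continuous (fun g : SL2 => (g 1 0 : ℝ) * w + g 1 1) :=
      ((((continuous_apply_apply 1 0).comp (continuous_subtype_val (p := fun A : Matrix (Fin 2) (Fin 2) ℝ => A.det = 1))).mul continuous_const).add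
        ((continuous_apply_apply 1 1).comp (continuous_subtype_val (p := fun A : Matrix (Fin 2) (Fin 2) ℝ => A.det = 1))))
    have hΦ : ContinuousAt
        (fun g : SL2 => ((g 0 0 : ℝ) * w + g 0 1) / ((g 1 0 : ℝ) * w + g 1 1)) x :=
      hcN.continuousAt.div hcD.continuousAt hxd
    have hU1 : (fun g : SL2 => ((g 0 0 : ℝ) * w + g 0 1) / ((g 1 0 : ℝ) * w + g 1 1)) ⁻¹' Cᶜ
        ∈ 𝓝 x := by
      apply hΦ.preimage_mem_nhds
      have : ((x 0 0 : ℝ) * w + x 0 1) / ((x 1 0 : ℝ) * w + x 1 1) = w := hxw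
      rw [this]
      exact hCclosed.isOpen_compl.mem_nhds hwC
    have hU2 : (fun g : SL2 => (g 1 0 : ℝ) * w + g 1 1) ⁻¹' ({0}ᶜ) ∈ 𝓝 x :=
      hcD.continuousAt.preimage_mem_nhds (compl_singleton_mem_nhds hxd)
    refine ⟨_, inter_mem hU1 hU2, ?_⟩
    intro g hgS hgU
    obtain ⟨hg1, _⟩ := hgU
    have hKmem : mobiusExt g (ψ w) ∈ K := key g hgS ⟨ψ w, hψJ w hw, rfl⟩
    obtain ⟨hd, hio, heq⟩ := hmem g w (hKJ hKmem)
    apply hg1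
    show ψ (((g 0 0 : ℝ) * w + g 0 1) / ((g 1 0 : ℝ) * w + g 1 1)) ∈ K
    rw [← heq]; exact hKmem
  have h1d : ((1 : SL2) 1 0 : ℝ) * w + (1 : SL2) 1 1 ≠ 0 := by norm_num
  have h1w : (((1 : SL2) 0 0 : ℝ) * w + (1 : SL2) 0 1)
      / (((1 : SL2) 1 0 : ℝ) * w + (1 : SL2) 1 1) = w := by norm_num
  have hn1d : ((-1 : SL2) 1 0 : ℝ) * w + (-1 : SL2) 1 1 ≠ 0 := by
    have h0 : ((-1 : SL2) 1 0 : ℝ) = 0 := by simp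
    have h1 : ((-1 : SL2) 1 1 : ℝ) = -1 := by simp
    rw [h0, h1]; norm_num
  have hn1w : (((-1 : SL2) 0 0 : ℝ) * w + (-1 : SL2) 0 1)
      / (((-1 : SL2) 1 0 : ℝ) * w + (-1 : SL2) 1 1) = w := by
    have h0 : ((-1 : SL2) 1 0 : ℝ) = 0 := by simp
    have h1 : ((-1 : SL2) 1 1 : ℝ) = -1 := by simp
    have h2 : ((-1 : SL2) 0 0 : ℝ) = -1 := by simp
    have h3 : ((-1 : SL2) 0 1 : ℝ) = 0 := by simp
    rw [h0, h1, h2, h3]; norm_num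
  obtain ⟨U1, hU1n, hU1s⟩ := hsep 1 h1d h1w
  obtain ⟨U2, hU2n, hU2s⟩ := hsep (-1) hn1d hn1w
  refine ⟨noell, ?_, ?_, fun h => hU1s 1 h (mem_of_mem_nhds hU1n),
    fun h => hU2s (-1) h (mem_of_mem_nhds hU2n)⟩
  · intro hacc
    obtain ⟨y, hy, _⟩ := accPt_iff_nhds.mp hacc U1 hU1n
    exact hU1s y hy.2 hy.1
  · intro hacc
    obtain ⟨y, hy, _⟩ := accPt_iff_nhds.mp hacc U2 hU2n
    exact hU2s y hy.2 hy.1
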